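/- arXiv:1705.01420 — 2 statements merged into one kernel-verified Lean document; each statement's English description precedes it below -/
import Mathlib

section
/- Let (X, 𝓑, μ) be a probability space, let T₁, T₂ : X → X be commuting invertible measure-preserving transformations such that T₂ ∘ T₁^{-1} is ergodic, and let f₁, f₂ ∈ L^∞(X, 𝓑, μ). If (N_k) is a strictly increasing sequence of positive integers and c ∈ ℝ is a constant such that (1/N_k) ∑_{n=0}^{N_k−1} f₁(T₁ⁿ x) f₂(T₂ⁿ x) → c for μ-almost every x ∈ X, then c = (∫ f₁ dμ)(∫ f₂ dμ). -/
open MeasureTheory Filter Finset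

open scoped ENNReal Topology

set_option synthInstance.maxHeartbeats 400000 in
theorem aux_proj {E : Type*} [NormedAddCommGroup E] [InnerProductSpace ℝ E] [CompleteSpace E]
    (U : E →L[ℝ] E) (hU : ‖U‖ ≤ 1) (g : E) :
    ∃ y : E, Tendsto (birkhoffAverage ℝ U _root_.id · g) atTop (𝓝 y) ∧ U y = y ∧
      ∀ e : E, U e = e → (inner ℝ e y : ℝ) = inner ℝ e g := by
  refine ⟨(U.eqLocus (1 : E →L[ℝ] E)).starProjection g,
    by rw [Submodule.starProjection_apply]; exact U.tendsto_birkhoffAverage_orthogonalProjection hU g, ?_, ?_⟩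
  · have := Submodule.starProjection_apply_mem (U.eqLocus (1 : E →L[ℝ] E)) g
    rw [LinearMap.mem_eqLocus] at this; simpa using this
  · intro e he
    have heK : e ∈ U.eqLocus (1 : E →L[ℝ] E) := by
      rw [LinearMap.mem_eqLocus]; simpa using he
    rw [← Submodule.inner_starProjection_left_eq_right,
      Submodule.starProjection_eq_self_iff.mpr heK]

set_option maxHeartbeats 1000000 in
theorem aux_mean_ergodic {X : Type*} [MeasurableSpace X] (μ : Measure X)
    [IsProbabilityMeasure μ] {S : X → X} (herg : Ergodic S μ) (f₁ f₂ : X → ℝ)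
    (h₁ : MemLp f₁ 2 μ) (h₂ : MemLp f₂ 2 μ) :
    Tendsto (fun n : ℕ => (n : ℝ)⁻¹ * ∑ k ∈ Finset.range n, ∫ x, f₁ x * f₂ (S^[k] x) ∂μ)
      atTop (𝓝 ((∫ x, f₁ x ∂μ) * ∫ x, f₂ x ∂μ)) := by
  have hS : MeasurePreserving S μ μ := herg.toMeasurePreserving
  haveI : Nonempty X := Measure.nonempty_of_neZero μ
  obtain ⟨y, hty, hyU, hyinner⟩ := aux_proj
    (Lp.compMeasurePreservingₗᵢ (E := ℝ) (p := 2) ℝ S hS).toContinuousLinearMap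
    (LinearIsometry.norm_toContinuousLinearMap_le _) (h₂.toLp f₂)
  have hUae : ∀ h : Lp ℝ 2 μ,
      ⇑((Lp.compMeasurePreservingₗᵢ (E := ℝ) (p := 2) ℝ S hS).toContinuousLinearMap h)
        =ᵐ[μ] ⇑h ∘ S := fun h => Lp.coeFn_compMeasurePreserving h hS
  -- iterates of the operator
  have hUk : ∀ k : ℕ,
      ⇑((⇑((Lp.compMeasurePreservingₗᵢ (E := ℝ) (p := 2) ℝ S hS).toContinuousLinearMap))^[k]
        (h₂.toLp f₂)) =ᵐ[μ] f₂ ∘ S^[k] := by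
    intro k
    induction k with
    | zero => simpa using h₂.coeFn_toLp
    | succ k ih =>
      rw [Function.iterate_succ_apply']
      refine (hUae _).trans ?_
      refine (hS.quasiMeasurePreserving.ae_eq ih).trans ?_
      exact Filter.EventuallyEq.rfl
  -- per-term inner products
  have hterm : ∀ k : ℕ,
      (inner ℝ (h₁.toLp f₁)
        ((⇑((Lp.compMeasurePreservingₗᵢ (E := ℝ) (p := 2) ℝ S hS).toContinuousLinearMap))^[k]
          (h₂.toLp f₂)) : ℝ) = ∫ x, f₁ x * f₂ (S^[k] x) ∂μ := by
    intro k
    rw [L2.inner_def]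
    refine integral_congr_ae ?_
    filter_upwards [h₁.coeFn_toLp, hUk k] with x hx1 hx2
    simp only [LinearIsometry.coe_toContinuousLinearMap] at hx2
    simp [hx1, hx2, RCLike.inner_apply, starRingEnd_apply, star_trivial, mul_comm]
  -- the limit y is a.e. constant by ergodicity
  have hycomp : (⇑y : X → ℝ) ∘ S =ᵐ[μ] ⇑y := by
    have h1 := hUae y
    rw [hyU] at h1
    exact h1.symm
  obtain ⟨d, hd⟩ := herg.ae_eq_const_of_ae_eq_comp_ae (Lp.aestronglyMeasurable y) hycomp
  -- the constant equals ∫ f₂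
  have hone : MemLp (fun _ : X => (1:ℝ)) 2 μ := memLp_const 1
  have heU : (Lp.compMeasurePreservingₗᵢ (E := ℝ) (p := 2) ℝ S hS).toContinuousLinearMap
      (hone.toLp _) = hone.toLp _ := by
    apply Lp.ext
    refine (hUae _).trans ?_
    exact (hS.quasiMeasurePreserving.ae_eq (MemLp.coeFn_toLp _)).trans
      (MemLp.coeFn_toLp _).symm
  have hd2 : d = ∫ x, f₂ x ∂μ := by
    have h2 := hyinner _ heU
    rw [L2.inner_def, L2.inner_def] at h2
    have hL : ∫ x, (inner ℝ ((hone.toLp _) x) ((y : Lp ℝ 2 μ) x) : ℝ) ∂μ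
        = d := by
      rw [show d = ∫ (_ : X), d ∂μ by simp]
      refine integral_congr_ae ?_
      filter_upwards [hone.coeFn_toLp, hd] with x hx hy
      simp [hx, hy, RCLike.inner_apply, starRingEnd_apply, star_trivial]
    have hR : ∫ x, (inner ℝ ((hone.toLp _) x)
        (((h₂.toLp f₂) : Lp ℝ 2 μ) x) : ℝ) ∂μ = ∫ x, f₂ x ∂μ := by
      refine integral_congr_ae ?_
      filter_upwards [hone.coeFn_toLp, h₂.coeFn_toLp] with x hx hy
      simp [hx, hy, RCLike.inner_apply, starRingEnd_apply, star_trivial]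
    rw [hL, hR] at h2
    exact h2
  -- value of the limit
  have hval : (inner ℝ (h₁.toLp f₁) y : ℝ) = (∫ x, f₁ x ∂μ) * ∫ x, f₂ x ∂μ := by
    rw [L2.inner_def]
    have h3 : ∫ x, (inner ℝ (((h₁.toLp f₁) : Lp ℝ 2 μ) x) ((y : Lp ℝ 2 μ) x) : ℝ) ∂μ
        = ∫ x, f₁ x * d ∂μ := by
      refine integral_congr_ae ?_
      filter_upwards [h₁.coeFn_toLp, hd] with x hx hy
      simp [hx, hy, RCLike.inner_apply, starRingEnd_apply, star_trivial, mul_comm]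
    rw [h3, integral_mul_const, hd2]
  -- conclude
  have hfin := Filter.Tendsto.inner (𝕜 := ℝ) (tendsto_const_nhds (x := h₁.toLp f₁) (f := atTop)) hty
  rw [hval] at hfin
  refine hfin.congr ?_
  intro n
  rw [show birkhoffAverage ℝ
      (⇑((Lp.compMeasurePreservingₗᵢ (E := ℝ) (p := 2) ℝ S hS).toContinuousLinearMap))
      _root_.id n (h₂.toLp f₂) = (n : ℝ)⁻¹ • ∑ k ∈ Finset.range n,
        (⇑((Lp.compMeasurePreservingₗᵢ (E := ℝ) (p := 2) ℝ S hS).toContinuousLinearMap))^[k]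
          (h₂.toLp f₂) from by simp [birkhoffAverage, birkhoffSum]]
  rw [real_inner_smul_right, inner_sum]
  congr 1
  exact Finset.sum_congr rfl fun k _ => hterm k

/-- If `T₁, T₂` are commuting invertible measure-preserving transformations of a probability
space with `T₂ ∘ T₁⁻¹` ergodic, and the nonconventional averages of `f₁, f₂ ∈ L^∞` converge
a.e. along a subsequence to a constant `c`, then `c = (∫ f₁ dμ)(∫ f₂ dμ)`. -/
theorem subsequential_limit_eq_prod_integrals_two
    {X : Type*} [MeasurableSpace X] (μ : Measure X) [IsProbabilityMeasure μ]
    (T₁ T₂ : X ≃ᵐ X)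
    (hT₁ : MeasurePreserving T₁ μ μ) (hT₂ : MeasurePreserving T₂ μ μ)
    (hcomm : ∀ x, T₁ (T₂ x) = T₂ (T₁ x))
    (herg : Ergodic (⇑T₂ ∘ ⇑T₁.symm) μ)
    (f₁ f₂ : X → ℝ) (hf₁ : MemLp f₁ ⊤ μ) (hf₂ : MemLp f₂ ⊤ μ)
    (N : ℕ → ℕ) (hN : StrictMono N) (hNpos : ∀ k, 0 < N k) (c : ℝ)
    (hconv : ∀ᵐ x ∂μ,
      Tendsto
        (fun k : ℕ =>
          (N k : ℝ)⁻¹ * ∑ n ∈ Finset.range (N k), f₁ ((⇑T₁)^[n] x) * f₂ ((⇑T₂)^[n] x))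
        atTop (nhds c)) :
    c = (∫ x, f₁ x ∂μ) * ∫ x, f₂ x ∂μ := by
  -- commutation
  have hcomm' : ∀ x, T₂ (T₁.symm x) = T₁.symm (T₂ x) := by
    intro x
    apply T₁.injective
    rw [hcomm (T₁.symm x), T₁.apply_symm_apply, T₁.apply_symm_apply]
  have hiter : ∀ n : ℕ, (⇑T₂ ∘ ⇑T₁.symm)^[n] = (⇑T₂)^[n] ∘ (⇑T₁.symm)^[n] :=
    fun n => Function.Commute.comp_iterate (fun x => hcomm' x) n
  have hleft : ∀ n : ℕ, ∀ x, (⇑T₁.symm)^[n] ((⇑T₁)^[n] x) = x := fun n =>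
    Function.LeftInverse.iterate T₁.symm_apply_apply n
  have hemb : ∀ n : ℕ, MeasurableEmbedding ((⇑T₁)^[n]) := by
    intro n
    induction n with
    | zero => simpa using MeasurableEmbedding.id
    | succ n ih =>
      rw [Function.iterate_succ]
      exact MeasurableEmbedding.comp ih T₁.measurableEmbedding
  -- change of variables
  have han : ∀ n : ℕ, ∫ x, f₁ ((⇑T₁)^[n] x) * f₂ ((⇑T₂)^[n] x) ∂μ
      = ∫ x, f₁ x * f₂ ((⇑T₂ ∘ ⇑T₁.symm)^[n] x) ∂μ := by
    intro n
    rw [← MeasurePreserving.integral_comp (hT₁.iterate n) (hemb n)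
      (fun y => f₁ y * f₂ ((⇑T₂ ∘ ⇑T₁.symm)^[n] y))]
    refine integral_congr_ae (Filter.EventuallyEq.of_eq (funext fun x => ?_))
    simp [hiter n, hleft n x]
  -- bounds
  have hb₁ : ∀ᵐ x ∂μ, ‖f₁ x‖ ≤ (eLpNorm f₁ ⊤ μ).toReal := by
    have hlt : eLpNormEssSup f₁ μ ≠ ⊤ := by
      rw [← eLpNorm_exponent_top]; exact hf₁.2.ne
    filter_upwards [ae_le_eLpNormEssSup (f := f₁) (μ := μ)] with x hx
    rw [eLpNorm_exponent_top]
    calc ‖f₁ x‖ = ((‖f₁ x‖₊ : ℝ≥0∞)).toReal := by simp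
      _ ≤ (eLpNormEssSup f₁ μ).toReal := ENNReal.toReal_mono hlt hx
  have hb₂ : ∀ᵐ x ∂μ, ‖f₂ x‖ ≤ (eLpNorm f₂ ⊤ μ).toReal := by
    have hlt : eLpNormEssSup f₂ μ ≠ ⊤ := by
      rw [← eLpNorm_exponent_top]; exact hf₂.2.ne
    filter_upwards [ae_le_eLpNormEssSup (f := f₂) (μ := μ)] with x hx
    rw [eLpNorm_exponent_top]
    calc ‖f₂ x‖ = ((‖f₂ x‖₊ : ℝ≥0∞)).toReal := by simp
      _ ≤ (eLpNormEssSup f₂ μ).toReal := ENNReal.toReal_mono hlt hx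
  set C₁ := (eLpNorm f₁ ⊤ μ).toReal with hC₁def
  set C₂ := (eLpNorm f₂ ⊤ μ).toReal with hC₂def
  have hC₁0 : 0 ≤ C₁ := ENNReal.toReal_nonneg
  have hC₂0 : 0 ≤ C₂ := ENNReal.toReal_nonneg
  have hbd : ∀ᵐ x ∂μ, ∀ n : ℕ, ‖f₁ ((⇑T₁)^[n] x)‖ ≤ C₁ ∧ ‖f₂ ((⇑T₂)^[n] x)‖ ≤ C₂ := by
    rw [ae_all_iff]
    intro n
    exact ((hT₁.iterate n).quasiMeasurePreserving.ae hb₁).and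
      ((hT₂.iterate n).quasiMeasurePreserving.ae hb₂)
  have hmeas : ∀ n : ℕ,
      AEStronglyMeasurable (fun x => f₁ ((⇑T₁)^[n] x) * f₂ ((⇑T₂)^[n] x)) μ := fun n =>
    (hf₁.aestronglyMeasurable.comp_quasiMeasurePreserving
        (hT₁.iterate n).quasiMeasurePreserving).mul
      (hf₂.aestronglyMeasurable.comp_quasiMeasurePreserving
        (hT₂.iterate n).quasiMeasurePreserving)
  have hint : ∀ n : ℕ, Integrable (fun x => f₁ ((⇑T₁)^[n] x) * f₂ ((⇑T₂)^[n] x)) μ := by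
    intro n
    refine (integrable_const (C₁ * C₂)).mono' (hmeas n) ?_
    filter_upwards [hbd] with x hx
    rw [norm_mul]
    exact mul_le_mul (hx n).1 (hx n).2 (norm_nonneg _) hC₁0
  -- dominated convergence
  have hDCT : Tendsto (fun k => ∫ x,
      (N k : ℝ)⁻¹ * ∑ n ∈ Finset.range (N k), f₁ ((⇑T₁)^[n] x) * f₂ ((⇑T₂)^[n] x) ∂μ)
      atTop (𝓝 (∫ _, c ∂μ)) := by
    refine tendsto_integral_of_dominated_convergence (fun _ => C₁ * C₂)
      (fun k => (Finset.aestronglyMeasurable_fun_sum (Finset.range (N k))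
        (fun n _ => hmeas n)).const_mul _)
      (integrable_const _) (fun k => ?_) hconv
    filter_upwards [hbd] with x hx
    calc ‖(N k : ℝ)⁻¹ * ∑ n ∈ Finset.range (N k), f₁ ((⇑T₁)^[n] x) * f₂ ((⇑T₂)^[n] x)‖
        ≤ (N k : ℝ)⁻¹ * ∑ n ∈ Finset.range (N k), (C₁ * C₂) := by
          rw [norm_mul, Real.norm_eq_abs ((N k : ℝ)⁻¹), abs_of_nonneg (by positivity)]
          refine mul_le_mul_of_nonneg_left ?_ (by positivity)
          refine (norm_sum_le _ _).trans (Finset.sum_le_sum fun n _ => ?_)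
          rw [norm_mul]
          exact mul_le_mul (hx n).1 (hx n).2 (norm_nonneg _) hC₁0
      _ = C₁ * C₂ := by
          rw [Finset.sum_const, Finset.card_range, nsmul_eq_mul, ← mul_assoc,
            inv_mul_cancel₀ (by exact_mod_cast (hNpos k).ne'), one_mul]
  have hcint : ∫ (_ : X), c ∂μ = c := by simp
  rw [hcint] at hDCT
  have hIk : ∀ k : ℕ, ∫ x,
      (N k : ℝ)⁻¹ * ∑ n ∈ Finset.range (N k), f₁ ((⇑T₁)^[n] x) * f₂ ((⇑T₂)^[n] x) ∂μ
      = (N k : ℝ)⁻¹ * ∑ n ∈ Finset.range (N k),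
          ∫ x, f₁ x * f₂ ((⇑T₂ ∘ ⇑T₁.symm)^[n] x) ∂μ := by
    intro k
    rw [integral_const_mul, integral_finset_sum _ (fun n _ => hint n)]
    exact congrArg _ (Finset.sum_congr rfl fun n _ => han n)
  rw [tendsto_congr hIk] at hDCT
  -- mean ergodic theorem
  have hME := aux_mean_ergodic μ herg f₁ f₂
    (hf₁.mono_exponent le_top) (hf₂.mono_exponent le_top)
  have hMEsub := hME.comp hN.tendsto_atTop
  exact tendsto_nhds_unique hDCT hMEsub
end

section
/- Let (X, 𝓑, μ) be a probability space, let T₁, T₂ : X → X be commuting invertible measure-preserving transformations such that S = T₂ ∘ T₁^{-1} is ergodic, and let f₁, f₂ ∈ L^∞(X, 𝓑, μ). Then lim_{N→∞} (1/N) ∑_{n=0}^{N−1} ∫_X f₁(T₁ⁿ x) f₂(T₂ⁿ x) dμ(x) = (∫ f₁ dμ)(∫ f₂ dμ). -/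
open MeasureTheory Filter Finset

section Aux

variable {X : Type*} [MeasurableSpace X] {μ : Measure X}

/-- Integral of a composition with an iterate of a measure-preserving equiv. -/
lemma integral_comp_iterate (T : X ≃ᵐ X) (hT : MeasurePreserving T μ μ) (g : X → ℝ) (n : ℕ) :
    ∫ x, g ((⇑T)^[n] x) ∂μ = ∫ x, g x ∂μ := by
  induction n with
  | zero => simp
  | succ n ih =>
    have : ∀ x, (⇑T)^[n + 1] x = (⇑T)^[n] (T x) := fun x => by
      rw [Function.iterate_succ]; rfl
    simp_rw [this]
    rw [hT.integral_comp T.measurableEmbedding (fun y => g ((⇑T)^[n] y)), ih]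

end Aux

set_option maxHeartbeats 1000000
set_option synthInstance.maxHeartbeats 400000

/-- If `T₁, T₂` are commuting invertible measure-preserving transformations of a probability
space such that `T₂ ∘ T₁⁻¹` is ergodic, and `f₁, f₂ ∈ L^∞`, then
`(1/N) ∑_{n<N} ∫ f₁(T₁ⁿ x) f₂(T₂ⁿ x) dμ → (∫ f₁ dμ)(∫ f₂ dμ)`. -/
theorem average_integral_correlation_two_transformations
    {X : Type*} [MeasurableSpace X] (μ : Measure X) [IsProbabilityMeasure μ]
    (T₁ T₂ : X ≃ᵐ X)
    (hT₁ : MeasurePreserving T₁ μ μ) (hT₂ : MeasurePreserving T₂ μ μ)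
    (hcomm : ∀ x, T₁ (T₂ x) = T₂ (T₁ x))
    (herg : Ergodic (⇑T₂ ∘ ⇑T₁.symm) μ)
    (f₁ f₂ : X → ℝ) (hf₁ : MemLp f₁ ⊤ μ) (hf₂ : MemLp f₂ ⊤ μ) :
    Tendsto
      (fun N : ℕ =>
        (N : ℝ)⁻¹ * ∑ n ∈ Finset.range N, ∫ x, f₁ ((⇑T₁)^[n] x) * f₂ ((⇑T₂)^[n] x) ∂μ)
      atTop (nhds ((∫ x, f₁ x ∂μ) * ∫ x, f₂ x ∂μ)) := by
  set S : X → X := ⇑T₂ ∘ ⇑T₁.symm with hSdef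
  have hS : MeasurePreserving S μ μ := hT₂.comp (hT₁.symm T₁)
  -- S commutes with T₂
  have hST₂ : Function.Commute S ⇑T₂ := by
    intro y
    have h1 : T₁.symm (T₂ y) = T₂ (T₁.symm y) := by
      apply T₁.injective
      rw [T₁.apply_symm_apply, hcomm, T₁.apply_symm_apply]
    simp only [S, Function.comp_apply, h1]
  -- key commutation: S^[n] ∘ T₁^[n] = T₂^[n]
  have hkey : ∀ n x, S^[n] ((⇑T₁)^[n] x) = (⇑T₂)^[n] x := by
    intro n
    induction n with
    | zero => intro x; simp
    | succ n ih =>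
      intro x
      have hT1 : (⇑T₁)^[n + 1] x = T₁ ((⇑T₁)^[n] x) := by
        rw [Function.iterate_succ']; rfl
      have hS1 : ∀ y, S^[n + 1] y = S^[n] (S y) := fun y => by
        rw [Function.iterate_succ]; rfl
      have hskip : ∀ y, S (T₁ y) = T₂ y := fun y => by
        simp only [S, Function.comp_apply, T₁.symm_apply_apply]
      rw [hT1, hS1, hskip]
      calc S^[n] (T₂ ((⇑T₁)^[n] x)) = T₂ (S^[n] ((⇑T₁)^[n] x)) :=
            ((hST₂.iterate_left n) _)
        _ = T₂ ((⇑T₂)^[n] x) := by rw [ih]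
        _ = (⇑T₂)^[n + 1] x := by rw [Function.iterate_succ']; rfl
  -- reduce the integrals to correlations along S
  have hint : ∀ n, ∫ x, f₁ ((⇑T₁)^[n] x) * f₂ ((⇑T₂)^[n] x) ∂μ
      = ∫ x, f₁ x * f₂ (S^[n] x) ∂μ := by
    intro n
    calc ∫ x, f₁ ((⇑T₁)^[n] x) * f₂ ((⇑T₂)^[n] x) ∂μ
        = ∫ x, (fun y => f₁ y * f₂ (S^[n] y)) ((⇑T₁)^[n] x) ∂μ := by
          refine integral_congr_ae (Filter.Eventually.of_forall fun x => ?_)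
          simp only [hkey n x]
      _ = ∫ x, f₁ x * f₂ (S^[n] x) ∂μ :=
          integral_comp_iterate T₁ hT₁ (fun y => f₁ y * f₂ (S^[n] y)) n
  -- move to L²
  have hf₁2 : MemLp f₁ 2 μ := hf₁.mono_exponent le_top
  have hf₂2 : MemLp f₂ 2 μ := hf₂.mono_exponent le_top
  set F₁ : Lp ℝ 2 μ := hf₁2.toLp f₁ with hF₁
  set F₂ : Lp ℝ 2 μ := hf₂2.toLp f₂ with hF₂
  set A : Lp ℝ 2 μ →ₗᵢ[ℝ] Lp ℝ 2 μ := Lp.compMeasurePreservingₗᵢ ℝ S hS with hA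
  set K : Lp ℝ 2 μ →L[ℝ] Lp ℝ 2 μ := A.toContinuousLinearMap with hK
  have hKnorm : ‖K‖ ≤ 1 := A.norm_toContinuousLinearMap_le
  -- iterates of K
  have hKn : ∀ n, (⇑K)^[n] F₂
      = (hf₂2.comp_measurePreserving (hS.iterate n)).toLp (f₂ ∘ S^[n]) := by
    intro n
    induction n with
    | zero => rfl
    | succ n ih =>
      rw [Function.iterate_succ', Function.comp_apply, ih]
      exact Lp.toLp_compMeasurePreserving _ hS
  -- inner products
  have hinner : ∀ n, (inner ℝ F₁ ((⇑K)^[n] F₂) : ℝ) = ∫ x, f₁ x * f₂ (S^[n] x) ∂μ := by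
    intro n
    rw [hKn n, L2.inner_def]
    refine integral_congr_ae ?_
    filter_upwards [(hf₂2.comp_measurePreserving (hS.iterate n)).coeFn_toLp,
      hf₁2.coeFn_toLp] with x h2 h1
    simp [F₁, h1, h2, RCLike.inner_apply, mul_comm]
  -- the mean ergodic theorem
  have hMET := K.tendsto_birkhoffAverage_orthogonalProjection (𝕜 := ℝ) hKnorm F₂
  set One : Lp ℝ 2 μ := (memLp_const (p := 2) (μ := μ) (1 : ℝ)).toLp (fun _ => (1 : ℝ)) with hOne
  have hKone : K One = One := Lp.toLp_compMeasurePreserving _ hS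
  obtain ⟨P, hPmem, horth, hPlim⟩ :
      ∃ P : Lp ℝ 2 μ, P ∈ LinearMap.eqLocus (K : Lp ℝ 2 μ →ₗ[ℝ] Lp ℝ 2 μ) 1 ∧
        (inner ℝ One (F₂ - P) : ℝ) = 0 ∧
        Tendsto (fun N => birkhoffAverage ℝ (⇑K) _root_.id N F₂) atTop (nhds P) := by
    refine ⟨_, ?_, ?_, hMET⟩
    · exact SetLike.coe_mem _
    · refine (Submodule.mem_orthogonal _ _).1
        (Submodule.sub_starProjection_mem_orthogonal F₂) One ?_
      rw [LinearMap.mem_eqLocus]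
      exact hKone
  have hKP : K P = P := hPmem
  -- P is a.e. constant
  have hPS : ⇑P ∘ S =ᵐ[μ] ⇑P := by
    have h0 := Lp.coeFn_compMeasurePreserving (p := 2) P hS
    have h2 : Lp.compMeasurePreserving S hS P = P := hKP
    rw [h2] at h0
    exact h0.symm
  obtain ⟨c, hc⟩ := herg.ae_eq_const_of_ae_eq_comp_ae (Lp.aestronglyMeasurable P) hPS
  -- identify c
  have hinner_one : ∀ (G : Lp ℝ 2 μ), (inner ℝ One G : ℝ) = ∫ x, G x ∂μ := by
    intro G
    rw [L2.inner_def]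
    refine integral_congr_ae ?_
    filter_upwards [(memLp_const (p := 2) (μ := μ) (1 : ℝ)).coeFn_toLp] with x h1
    simp [One, h1, RCLike.inner_apply]
  have hintP : ∫ x, P x ∂μ = c := by
    rw [integral_congr_ae hc]
    simp
  have hcval : c = ∫ x, f₂ x ∂μ := by
    have h1 : (inner ℝ One F₂ : ℝ) = (inner ℝ One P : ℝ) := by
      have h0 := horth
      rw [inner_sub_right] at h0
      linarith
    rw [hinner_one, hinner_one, hintP] at h1
    rw [← h1]
    exact integral_congr_ae hf₂2.coeFn_toLp
  -- inner product with P
  have hinnerP : (inner ℝ F₁ P : ℝ) = (∫ x, f₁ x ∂μ) * ∫ x, f₂ x ∂μ := by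
    rw [L2.inner_def]
    have h3 : ∫ a, (inner ℝ (F₁ a) (P a) : ℝ) ∂μ = ∫ a, f₁ a * c ∂μ := by
      refine integral_congr_ae ?_
      filter_upwards [hf₁2.coeFn_toLp, hc] with x h1 h2
      simp [F₁, h1, h2, RCLike.inner_apply, mul_comm]
    rw [h3, integral_mul_const, hcval]
  -- put everything together
  have hfun : (fun N : ℕ =>
        (N : ℝ)⁻¹ * ∑ n ∈ Finset.range N, ∫ x, f₁ ((⇑T₁)^[n] x) * f₂ ((⇑T₂)^[n] x) ∂μ)
      = fun N : ℕ => (inner ℝ F₁ (birkhoffAverage ℝ (⇑K) _root_.id N F₂) : ℝ) := by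
    funext N
    rw [birkhoffAverage, birkhoffSum, inner_smul_right, inner_sum]
    simp only [id_eq, smul_eq_mul]
    congr 1
    exact Finset.sum_congr rfl fun n _ => by rw [hinner n, ← hint n]
  rw [hfun]
  have hcont : Tendsto (fun N : ℕ => (inner ℝ F₁ (birkhoffAverage ℝ (⇑K) _root_.id N F₂) : ℝ))
      atTop (nhds (inner ℝ F₁ P : ℝ)) :=
    Tendsto.inner tendsto_const_nhds hPlim
  rwa [hinnerP] at hcont
end
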